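/- For a nonzero complex number z and formal variables x₀, x, the formal delta function identity x₀^{-1}δ((x-z)/x₀) - x₀^{-1}δ((z-x)/(-x₀)) = z^{-1}δ((x-x₀)/z) holds in ℂ[[x₀, x₀^{-1}, x, x^{-1}]], where δ(y) = ∑_{n∈ℤ} y^n and binomial expressions (x±z)^n are expanded in nonnegative powers of the second summand. -/
import Mathlib

/-- The generalized binomial coefficient `C(r,i) = r(r-1)⋯(r-i+1)/i!` for `r : ℤ`. -/
noncomputable def gbinom (r : ℤ) (i : ℕ) : ℂ :=
  (∏ j ∈ Finset.range i, ((r : ℂ) - j)) / (Nat.factorial i : ℂ)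

lemma prod_nat (n : ℕ) : ∀ i : ℕ,
    (∏ j ∈ Finset.range i, ((n : ℂ) - j)) = (n.descFactorial i : ℂ) := by
  intro i
  induction i with
  | zero => simp
  | succ i ih =>
      rw [Finset.prod_range_succ, ih, Nat.descFactorial_succ]
      rcases le_or_gt (i+1) n with h | h
      · push_cast [Nat.cast_sub (by omega : i ≤ n)]; ring
      · rw [show n - i = 0 by omega]
        rcases Nat.lt_succ_iff_lt_or_eq.1 h with h' | rfl
        · rw [Nat.descFactorial_eq_zero_iff_lt.2 h']; simp
        · simp

lemma gbinom_nat (n i : ℕ) : gbinom n i = (n.choose i : ℂ) := by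
  rw [gbinom, Int.cast_natCast, prod_nat, Nat.descFactorial_eq_factorial_mul_choose]
  push_cast
  rw [mul_comm, mul_div_assoc, div_self (by exact_mod_cast (Nat.factorial_ne_zero i)), mul_one]

lemma prod_neg (m : ℕ) : ∀ i : ℕ,
    (∏ j ∈ Finset.range i, (((-(m : ℤ) - 1 : ℤ) : ℂ) - j))
      = (-1 : ℂ) ^ i * ((m + i).descFactorial i : ℂ) := by
  intro i
  induction i with
  | zero => simp
  | succ i ih =>
      rw [Finset.prod_range_succ, ih,
        show m + (i+1) = (m + i) + 1 by ring, Nat.succ_descFactorial_succ]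
      push_cast
      ring

lemma gbinom_neg (m i : ℕ) : gbinom (-(m : ℤ) - 1) i = (-1 : ℂ) ^ i * ((m + i).choose i : ℂ) := by
  rw [gbinom, prod_neg, Nat.descFactorial_eq_factorial_mul_choose]
  push_cast
  rw [mul_div_assoc]
  congr 1
  rw [mul_comm, mul_div_assoc, div_self (by exact_mod_cast (Nat.factorial_ne_zero i)), mul_one]

lemma neg_one_sq_pow (k : ℕ) : ((-1:ℂ))^k * (-1)^k = 1 := by
  rw [← pow_add, ← two_mul, pow_mul]; norm_num

/-- the formal delta-function identity
`x₀⁻¹δ((x-z)/x₀) - x₀⁻¹δ((z-x)/(-x₀)) = z⁻¹δ((x-x₀)/z)`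
in `ℂ[[x₀,x₀⁻¹,x,x⁻¹]]`, stated coefficientwise: for each `a, b : ℤ` the coefficients of
`x₀^a x^b` on the two sides agree.  Here
`x₀⁻¹δ((x-z)/x₀) = ∑ₙ x₀^{-n-1}(x-z)ⁿ` with `(x-z)ⁿ = ∑ᵢ C(n,i) x^{n-i} (-z)^i`
(so its `x₀^a x^b`-coefficient comes from `n = -a-1`, `i = -a-1-b ≥ 0`);
`x₀⁻¹δ((z-x)/(-x₀)) = ∑ₙ (-1)ⁿ x₀^{-n-1}(z-x)ⁿ` with `(z-x)ⁿ = ∑ᵢ C(n,i) z^{n-i}(-x)^i`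
(coefficient from `n = -a-1`, `i = b ≥ 0`); and
`z⁻¹δ((x-x₀)/z) = ∑ₙ z^{-n-1}(x-x₀)ⁿ` with `(x-x₀)ⁿ = ∑ᵢ C(n,i) x^{n-i}(-x₀)^i`
(coefficient from `i = a ≥ 0`, `n = a + b`). -/
theorem stmt7 (z : ℂ) (hz : z ≠ 0) :
    ∀ a b : ℤ,
      (if 0 ≤ -a - 1 - b then
          gbinom (-a - 1) (-a - 1 - b).toNat * (-z) ^ ((-a - 1 - b).toNat) else 0)
      - (if 0 ≤ b then
          (-1 : ℂ) ^ (a + 1) * gbinom (-a - 1) b.toNat * (-1 : ℂ) ^ (b.toNat) *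
            z ^ (-a - 1 - b) else 0)
      = (if 0 ≤ a then
          z ^ (-(a + b) - 1) * gbinom (a + b) a.toNat * (-1 : ℂ) ^ (a.toNat) else 0) := by
  intro a b
  rcases le_or_gt 0 a with ha | ha
  · obtain ⟨m, rfl⟩ := Int.eq_ofNat_of_zero_le ha
    rcases le_or_gt 0 b with hb | hb
    · -- a = m ≥ 0, b = k ≥ 0
      obtain ⟨k, rfl⟩ := Int.eq_ofNat_of_zero_le hb
      rw [if_neg (show ¬(0:ℤ) ≤ -(m:ℤ) - 1 - (k:ℤ) by omega),
        if_pos (show (0:ℤ) ≤ (k:ℤ) by omega),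
        if_pos (show (0:ℤ) ≤ (m:ℤ) by omega)]
      rw [gbinom_neg m ((k:ℤ)).toNat]
      rw [show ((m:ℤ) + (k:ℤ)) = ((m + k : ℕ) : ℤ) by push_cast; ring, gbinom_nat]
      simp only [Int.toNat_natCast]
      rw [show ((m:ℤ) + 1) = ((m + 1 : ℕ) : ℤ) by push_cast; ring, zpow_natCast]
      rw [show (-(m:ℤ) - 1 - (k:ℤ)) = (-(((m+k:ℕ)):ℤ) - 1) by push_cast; ring]
      rw [show (m + k).choose m = (m + k).choose k from Nat.choose_symm_add]
      linear_combination (-(-1:ℂ)^(m+1) * ((m+k).choose k : ℂ)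
        * z ^ (-(((m+k:ℕ)):ℤ) - 1)) * neg_one_sq_pow k
    · obtain ⟨k, rfl⟩ : ∃ k : ℕ, b = -((k:ℤ)+1) := ⟨(-b-1).toNat, by omega⟩
      rcases le_or_gt m k with hmk | hmk
      · obtain ⟨d, rfl⟩ : ∃ d : ℕ, k = m + d := ⟨k - m, by omega⟩
        rw [if_pos (show (0:ℤ) ≤ -(m:ℤ) - 1 - -(((m+d:ℕ):ℤ)+1) by push_cast; omega),
          if_neg (show ¬(0:ℤ) ≤ -(((m+d:ℕ):ℤ)+1) by push_cast; omega),
          if_pos (show (0:ℤ) ≤ (m:ℤ) by omega)]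
        rw [show (-(m:ℤ) - 1 - -(((m+d:ℕ):ℤ)+1)) = ((d:ℕ):ℤ) by push_cast; ring]
        rw [Int.toNat_natCast, gbinom_neg m d]
        rw [show ((m:ℤ) + -(((m+d:ℕ):ℤ)+1)) = -((d:ℕ):ℤ) - 1 by push_cast; ring,
          gbinom_neg d ((m:ℤ)).toNat]
        simp only [Int.toNat_natCast]
        rw [show (-(-((d:ℕ):ℤ) - 1) - 1) = ((d:ℕ):ℤ) by push_cast; ring, zpow_natCast]
        rw [show (d + m).choose m = (m + d).choose d by
          rw [Nat.add_comm d m]; exact Nat.choose_symm_add]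
        rw [neg_pow z d]
        linear_combination (((m+d).choose d : ℂ) * z ^ d) * neg_one_sq_pow d
          - (((m+d).choose d : ℂ) * z ^ d) * neg_one_sq_pow m
      · rw [if_neg (show ¬(0:ℤ) ≤ -(m:ℤ) - 1 - -((k:ℤ)+1) by omega),
          if_neg (show ¬(0:ℤ) ≤ -((k:ℤ)+1) by omega),
          if_pos (show (0:ℤ) ≤ (m:ℤ) by omega)]
        rw [show ((m:ℤ) + -((k:ℤ)+1)) = ((m - k - 1 : ℕ) : ℤ) by omega, gbinom_nat]
        simp only [Int.toNat_natCast]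
        rw [Nat.choose_eq_zero_of_lt (by omega : m - k - 1 < m)]
        simp
  · obtain ⟨m, rfl⟩ : ∃ m : ℕ, a = -((m:ℤ)+1) := ⟨(-a-1).toNat, by omega⟩
    rw [if_neg (show ¬(0:ℤ) ≤ -((m:ℤ)+1) by omega)]
    rcases le_or_gt 0 b with hb | hb
    · obtain ⟨k, rfl⟩ := Int.eq_ofNat_of_zero_le hb
      rcases le_or_gt k m with hkm | hkm
      · obtain ⟨d, rfl⟩ : ∃ d : ℕ, m = k + d := ⟨m - k, by omega⟩
        rw [if_pos (show (0:ℤ) ≤ -(-(((k+d:ℕ):ℤ)+1)) - 1 - (k:ℤ) by push_cast; omega),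
          if_pos (show (0:ℤ) ≤ (k:ℤ) by omega)]
        rw [show (-(-(((k+d:ℕ):ℤ)+1)) - 1 - (k:ℤ)) = ((d:ℕ):ℤ) by push_cast; ring]
        rw [show (-(-(((k+d:ℕ):ℤ)+1)) - 1) = (((k+d:ℕ)):ℤ) by push_cast; ring]
        simp only [Int.toNat_natCast]
        rw [gbinom_nat, gbinom_nat, zpow_natCast]
        rw [show (-(((k+d:ℕ):ℤ)+1)+1) = -((k+d:ℕ):ℤ) by ring, zpow_neg, zpow_natCast,
          ← inv_pow, inv_neg, inv_one]
        rw [show (k + d).choose k = (k + d).choose d from Nat.choose_symm_add]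
        rw [neg_pow z d]
        linear_combination (-(((k+d).choose d : ℂ)) * z ^ d * (-1:ℂ)^d) * neg_one_sq_pow k
      · rw [if_neg (show ¬(0:ℤ) ≤ -(-((m:ℤ)+1)) - 1 - (k:ℤ) by omega),
          if_pos (show (0:ℤ) ≤ (k:ℤ) by omega)]
        rw [show (-(-((m:ℤ)+1)) - 1) = ((m:ℕ):ℤ) by push_cast; ring]
        simp only [Int.toNat_natCast]
        rw [gbinom_nat, Nat.choose_eq_zero_of_lt (by omega : m < k)]
        simp
    · obtain ⟨k, rfl⟩ : ∃ k : ℕ, b = -((k:ℤ)+1) := ⟨(-b-1).toNat, by omega⟩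
      rw [if_pos (show (0:ℤ) ≤ -(-((m:ℤ)+1)) - 1 - -((k:ℤ)+1) by omega),
        if_neg (show ¬(0:ℤ) ≤ -((k:ℤ)+1) by omega)]
      rw [show (-(-((m:ℤ)+1)) - 1 - -((k:ℤ)+1)) = (((m+k+1:ℕ)):ℤ) by push_cast; ring]
      rw [show (-(-((m:ℤ)+1)) - 1) = ((m:ℕ):ℤ) by push_cast; ring]
      simp only [Int.toNat_natCast]
      rw [gbinom_nat, Nat.choose_eq_zero_of_lt (by omega : m < m + k + 1)]
      simp
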